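/- Let H₂ denote the collection of closed lower layers in [0,1]², i.e., closed sets B ⊆ [0,1]² with ⟨B⟩ = B, and let Λ₂ = {u ∈ [0,1]² : u₁u₂ = 0}. For every B ∈ H₂ there exist probability distribution functions F₁, F₂ on ℝ such that, with T(x) = (F₁(x₁), F₂(x₂)) and A₀ = {x ∈ ℝ² : x₁ + x₂ ≤ 0}, one has ⟨T(A₀)⟩ = B ∪ Λ₂. -/

import Mathlib

open Set

def lowerLayer {d : ℕ} (B : Set (Fin d → ℝ)) : Set (Fin d → ℝ) := ⋃ u ∈ B, Set.Icc 0 u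

def IsDistFun (F : ℝ → ℝ) : Prop :=
  Monotone F ∧ (∀ x, ContinuousWithinAt F (Set.Ici x) x) ∧
  (∀ t, F t ∈ Set.Icc (0:ℝ) 1) ∧
  Filter.Tendsto F Filter.atBot (nhds 0) ∧ Filter.Tendsto F Filter.atTop (nhds 1)

theorem stmt5 (B : Set (Fin 2 → ℝ)) (hBsub : B ⊆ Set.Icc 0 1) (hBcl : IsClosed B)
    (hBlow : lowerLayer B = B) :
    ∃ F₁ F₂ : ℝ → ℝ, IsDistFun F₁ ∧ IsDistFun F₂ ∧
      lowerLayer ((fun x : Fin 2 → ℝ => ![F₁ (x 0), F₂ (x 1)]) ''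
          {x : Fin 2 → ℝ | x 0 + x 1 ≤ 0})
        = B ∪ {u ∈ Set.Icc (0 : Fin 2 → ℝ) 1 | u 0 * u 1 = 0} := by
  classical
  set C : Set (Fin 2 → ℝ) := B ∪ {u ∈ Set.Icc (0 : Fin 2 → ℝ) 1 | u 0 * u 1 = 0} with hCdef
  have le_pi : ∀ (p q r t : ℝ), p ≤ r → q ≤ t → (![p,q] : Fin 2 → ℝ) ≤ ![r,t] := by
    intro p q r t h1 h2
    rw [Pi.le_def]
    intro i
    fin_cases i <;> simpa
  have lo_pi : ∀ (p q : ℝ), 0 ≤ p → 0 ≤ q → (0 : Fin 2 → ℝ) ≤ ![p,q] := by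
    intro p q h1 h2
    rw [Pi.le_def]
    intro i
    fin_cases i <;> simpa
  have hi_pi : ∀ (p q : ℝ), p ≤ 1 → q ≤ 1 → (![p,q] : Fin 2 → ℝ) ≤ 1 := by
    intro p q h1 h2
    rw [Pi.le_def]
    intro i
    fin_cases i <;> simpa
  have hCsub : C ⊆ Set.Icc 0 1 := by
    rintro u (h | h)
    · exact hBsub h
    · exact h.1
  have hBlow' : ∀ u ∈ B, ∀ w : Fin 2 → ℝ, 0 ≤ w → w ≤ u → w ∈ B := by
    intro u hu w h0 hw
    rw [← hBlow]
    exact Set.mem_biUnion hu ⟨h0, hw⟩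
  have hClow : ∀ u ∈ C, ∀ w : Fin 2 → ℝ, 0 ≤ w → w ≤ u → w ∈ C := by
    rintro u (hu | ⟨hu1, hu2⟩) w h0 hw
    · exact Or.inl (hBlow' u hu w h0 hw)
    · refine Or.inr ⟨⟨h0, le_trans hw hu1.2⟩, ?_⟩
      rcases mul_eq_zero.1 hu2 with h | h
      · have : w 0 = 0 := le_antisymm (h ▸ hw 0) (h0 0)
        simp [this]
      · have : w 1 = 0 := le_antisymm (h ▸ hw 1) (h0 1)
        simp [this]
  have hCcl : IsClosed C := by
    apply hBcl.union
    have : {u ∈ Set.Icc (0 : Fin 2 → ℝ) 1 | u 0 * u 1 = 0}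
        = Set.Icc 0 1 ∩ ((fun u : Fin 2 → ℝ => u 0 * u 1) ⁻¹' {0}) := rfl
    rw [this]
    exact isClosed_Icc.inter (isClosed_singleton.preimage (by fun_prop))
  set g : ℝ → ℝ := fun a => sSup {s | (![a, s] : Fin 2 → ℝ) ∈ C} with hgdef
  have hΛ : ∀ a : ℝ, 0 ≤ a → a ≤ 1 → (![a, (0:ℝ)] : Fin 2 → ℝ) ∈ C := by
    intro a h0 h1
    exact Or.inr ⟨⟨lo_pi a 0 h0 le_rfl, hi_pi a 0 h1 zero_le_one⟩, by simp⟩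
  have hSbdd : ∀ a : ℝ, BddAbove {s | (![a, s] : Fin 2 → ℝ) ∈ C} := by
    intro a
    refine ⟨1, fun s hs => ?_⟩
    simpa using (hCsub hs).2 1
  have hScl : ∀ a : ℝ, IsClosed {s | (![a, s] : Fin 2 → ℝ) ∈ C} := by
    intro a
    have hcont : Continuous fun s : ℝ => (![a, s] : Fin 2 → ℝ) := by
      apply continuous_pi
      intro i
      fin_cases i
      · simpa using continuous_const
      · simpa using continuous_id'
    exact hCcl.preimage hcont
  have hgmem : ∀ a : ℝ, 0 ≤ a → a ≤ 1 → (![a, g a] : Fin 2 → ℝ) ∈ C := by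
    intro a h0 h1
    exact (hScl a).csSup_mem ⟨0, hΛ a h0 h1⟩ (hSbdd a)
  have hg0 : ∀ a : ℝ, 0 ≤ a → a ≤ 1 → 0 ≤ g a := by
    intro a h0 h1
    exact le_csSup (hSbdd a) (hΛ a h0 h1)
  have hg1 : ∀ a : ℝ, g a ≤ 1 := by
    intro a
    rcases Set.eq_empty_or_nonempty {s | (![a, s] : Fin 2 → ℝ) ∈ C} with h | h
    · rw [hgdef]; simp only [h, Real.sSup_empty]; norm_num
    · exact csSup_le h (fun s hs => by simpa using (hCsub hs).2 1)
  have hle_g : ∀ a s : ℝ, (![a, s] : Fin 2 → ℝ) ∈ C → s ≤ g a := by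
    intro a s hs
    exact le_csSup (hSbdd a) hs
  have hmemS : ∀ a : ℝ, 0 ≤ a → a ≤ 1 → ∀ s : ℝ, 0 ≤ s → s ≤ g a →
      (![a, s] : Fin 2 → ℝ) ∈ C := by
    intro a h0 h1 s hs0 hs1
    exact hClow _ (hgmem a h0 h1) _ (lo_pi _ _ h0 hs0) (le_pi _ _ _ _ le_rfl hs1)
  have hganti : ∀ a b : ℝ, 0 ≤ a → a ≤ b → b ≤ 1 → g b ≤ g a := by
    intro a b h0 hab h1
    refine hle_g a (g b) ?_
    exact hClow _ (hgmem b (h0.trans hab) h1) _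
      (lo_pi _ _ h0 (hg0 b (h0.trans hab) h1)) (le_pi _ _ _ _ hab le_rfl)
  have hgzero : g 0 = 1 := by
    refine le_antisymm (hg1 0) (hle_g 0 1 ?_)
    exact Or.inr ⟨⟨lo_pi 0 1 le_rfl zero_le_one, hi_pi 0 1 zero_le_one le_rfl⟩, by simp⟩
  have hgneg : ∀ a : ℝ, a < 0 → g a = 0 := by
    intro a ha
    have : {s | (![a, s] : Fin 2 → ℝ) ∈ C} = ∅ := by
      ext s
      simp only [Set.mem_setOf_eq, Set.mem_empty_iff_false, iff_false]
      intro hs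
      have := (hCsub hs).1 0
      simp at this
      linarith
    rw [hgdef]; simp only [this, Real.sSup_empty]
  -- left continuity of g
  have hgleft : ∀ a : ℝ, 0 < a → a ≤ 1 → ∀ ε > (0:ℝ), ∃ δ > (0:ℝ),
      ∀ b, a - δ < b → b ≤ a → g b < g a + ε := by
    intro a ha0 ha1 ε hε
    by_contra hcon
    push_neg at hcon
    choose b hb1 hb2 hb3 using fun n : ℕ => hcon (1/(n+1)) (by positivity)
    have hgA : 0 ≤ g a := hg0 a ha0.le ha1
    have hbnn : ∀ n, 0 ≤ b n := by
      intro n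
      by_contra hneg
      push_neg at hneg
      have h1 := hb3 n
      rw [hgneg (b n) hneg] at h1
      linarith
    have hmem : ∀ n, (![b n, g a + ε] : Fin 2 → ℝ) ∈ C := fun n =>
      hmemS (b n) (hbnn n) ((hb2 n).trans ha1) _ (by linarith) (by linarith [hb3 n])
    have hlow : Filter.Tendsto (fun n : ℕ => a - 1/(n+1 : ℝ)) Filter.atTop (nhds a) := by
      have := (tendsto_const_nhds (x := a) (f := Filter.atTop (α := ℕ))).sub
        tendsto_one_div_add_atTop_nhds_zero_nat
      simpa using this
    have htend : Filter.Tendsto b Filter.atTop (nhds a) :=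
      tendsto_of_tendsto_of_tendsto_of_le_of_le hlow tendsto_const_nhds
        (fun n => (hb1 n).le) (fun n => hb2 n)
    have htend2 : Filter.Tendsto (fun n => (![b n, g a + ε] : Fin 2 → ℝ))
        Filter.atTop (nhds ![a, g a + ε]) := by
      rw [tendsto_pi_nhds]
      intro i
      fin_cases i
      · simpa using htend
      · simpa using tendsto_const_nhds
    have hmemC : (![a, g a + ε] : Fin 2 → ℝ) ∈ C :=
      hCcl.mem_of_tendsto htend2 (Filter.Eventually.of_forall hmem)
    have := hle_g a _ hmemC
    linarith
  -- the distribution functions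
  set F₁ : ℝ → ℝ := fun t => max 0 (min t 1) with hF₁def
  set F₂ : ℝ → ℝ := fun t => if t < -1 then 0 else if t < 0 then g (-t) else 1 with hF₂def
  have hF₁range : ∀ t, 0 ≤ F₁ t ∧ F₁ t ≤ 1 := by
    intro t
    constructor
    · exact le_max_left _ _
    · exact max_le zero_le_one (min_le_right _ _)
  have hF₁id : ∀ a : ℝ, 0 ≤ a → a ≤ 1 → F₁ a = a := by
    intro a h0 h1
    rw [hF₁def]
    simp only
    rw [min_eq_left h1, max_eq_right h0]
  have hF₂range : ∀ t, 0 ≤ F₂ t ∧ F₂ t ≤ 1 := by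
    intro t
    rw [hF₂def]
    simp only
    split_ifs with h1 h2
    · norm_num
    · exact ⟨hg0 (-t) (by linarith) (by linarith), hg1 (-t)⟩
    · norm_num
  have hF₂neg : ∀ a : ℝ, 0 ≤ a → a ≤ 1 → F₂ (-a) = g a := by
    intro a h0 h1
    rcases eq_or_lt_of_le h0 with h | h
    · rw [hF₂def]
      simp only [← h]
      norm_num [hgzero]
    · rw [hF₂def]
      simp only
      rw [if_neg (by linarith), if_pos (by linarith), neg_neg]
  have hF₂mono : Monotone F₂ := by
    intro s t hst
    rw [hF₂def]
    simp only
    split_ifs with h1 h2 h3 h4 h5 h6 h7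
    · exact le_rfl
    · exact hg0 (-t) (by linarith) (by linarith)
    · exact zero_le_one
    · linarith
    · exact hganti (-t) (-s) (by linarith) (by linarith) (by linarith)
    · exact hg1 (-s)
    · linarith
    · linarith
    · exact le_rfl
  have hF₁dist : IsDistFun F₁ := by
    refine ⟨?_, ?_, ?_, ?_, ?_⟩
    · intro s t hst
      exact max_le_max le_rfl (min_le_min hst le_rfl)
    · intro x
      exact ((continuous_const.max (continuous_id.min continuous_const)).continuousAt).continuousWithinAt
    · intro t
      exact ⟨(hF₁range t).1, (hF₁range t).2⟩
    · have hev : F₁ =ᶠ[Filter.atBot] fun _ => (0:ℝ) := by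
        filter_upwards [Filter.eventually_le_atBot (0:ℝ)] with t ht
        rw [hF₁def]
        simp only
        rw [min_eq_left (by linarith), max_eq_left (by linarith)]
      exact Filter.Tendsto.congr' hev.symm tendsto_const_nhds
    · have hev : F₁ =ᶠ[Filter.atTop] fun _ => (1:ℝ) := by
        filter_upwards [Filter.eventually_ge_atTop (1:ℝ)] with t ht
        rw [hF₁def]
        simp only
        rw [min_eq_right ht, max_eq_right zero_le_one]
      exact Filter.Tendsto.congr' hev.symm tendsto_const_nhds
  have hF₂dist : IsDistFun F₂ := by
    refine ⟨hF₂mono, ?_, fun t => ⟨(hF₂range t).1, (hF₂range t).2⟩, ?_, ?_⟩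
    · intro x
      rcases lt_or_ge x (-1) with hx | hx
      · have hev : F₂ =ᶠ[nhds x] fun _ => (0:ℝ) := by
          filter_upwards [Iio_mem_nhds hx] with t ht
          rw [hF₂def]
          simp only
          rw [if_pos (Set.mem_Iio.mp ht)]
        exact (continuousAt_const.congr hev.symm).continuousWithinAt
      rcases lt_or_ge x 0 with hx0 | hx0
      · -- -1 ≤ x < 0
        rw [Metric.continuousWithinAt_iff]
        intro ε hε
        obtain ⟨δ, hδ, hδ2⟩ := hgleft (-x) (by linarith) (by linarith) ε hε
        refine ⟨min δ (-x), lt_min hδ (by linarith), ?_⟩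
        intro t ht hdist
        rw [Set.mem_Ici] at ht
        rw [Real.dist_eq, abs_of_nonneg (by linarith)] at hdist
        have ht0 : t < 0 := by
          have := lt_of_lt_of_le hdist (min_le_right δ (-x))
          linarith
        have htδ : t - x < δ := lt_of_lt_of_le hdist (min_le_left δ (-x))
        have hFt : F₂ t = g (-t) := by
          rw [hF₂def]
          simp only
          rw [if_neg (by linarith), if_pos ht0]
        have hFx : F₂ x = g (-x) := by
          rw [hF₂def]
          simp only
          rw [if_neg (by linarith), if_pos hx0]
        rw [hFt, hFx, Real.dist_eq]
        have h1 : g (-x) ≤ g (-t) :=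
          hganti (-t) (-x) (by linarith) (by linarith) (by linarith)
        have h2 : g (-t) < g (-x) + ε := hδ2 (-t) (by linarith) (by linarith)
        rw [abs_of_nonneg (by linarith)]
        linarith
      · have hx1 : F₂ x = 1 := by
          rw [hF₂def]
          simp only
          rw [if_neg (by linarith), if_neg (by linarith)]
        refine ContinuousWithinAt.congr (f := fun _ => (1:ℝ)) continuousWithinAt_const
          ?_ (by rw [hx1])
        intro t ht
        rw [Set.mem_Ici] at ht
        rw [hF₂def]
        simp only
        rw [if_neg (by linarith), if_neg (by linarith)]
    · have hev : F₂ =ᶠ[Filter.atBot] fun _ => (0:ℝ) := by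
        filter_upwards [Filter.eventually_le_atBot (-2:ℝ)] with t ht
        rw [hF₂def]
        simp only
        rw [if_pos (by linarith)]
      exact Filter.Tendsto.congr' hev.symm tendsto_const_nhds
    · have hev : F₂ =ᶠ[Filter.atTop] fun _ => (1:ℝ) := by
        filter_upwards [Filter.eventually_ge_atTop (0:ℝ)] with t ht
        rw [hF₂def]
        simp only
        rw [if_neg (by linarith), if_neg (by linarith)]
      exact Filter.Tendsto.congr' hev.symm tendsto_const_nhds
  refine ⟨F₁, F₂, hF₁dist, hF₂dist, ?_⟩

  apply Set.Subset.antisymm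
  · -- lower layer of image ⊆ C
    intro y hy
    rw [lowerLayer, Set.mem_iUnion₂] at hy
    obtain ⟨u, hu, hy0, hy1⟩ := hy
    obtain ⟨x, hx, rfl⟩ := hu
    rw [Set.mem_setOf_eq] at hx
    refine hClow _ ?_ y hy0 hy1
    show (![F₁ (x 0), F₂ (x 1)] : Fin 2 → ℝ) ∈ C
    set a := x 0
    set b := x 1
    rcases lt_or_ge b 0 with hb | hb
    · rcases lt_or_ge b (-1) with hb1 | hb1
      · -- F₂ b = 0
        have hFb : F₂ b = 0 := by
          rw [hF₂def]; simp only; rw [if_pos hb1]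
        rw [hFb]
        exact Or.inr ⟨⟨lo_pi _ _ (hF₁range a).1 le_rfl,
          hi_pi _ _ (hF₁range a).2 zero_le_one⟩, by simp⟩
      · -- -1 ≤ b < 0
        have hFb : F₂ b = g (-b) := by
          rw [hF₂def]; simp only; rw [if_neg (by linarith), if_pos hb]
        have hc0 : (0:ℝ) < -b := by linarith
        have hc1 : -b ≤ 1 := by linarith
        have hF₁le : F₁ a ≤ -b := by
          rw [hF₁def]
          simp only
          exact max_le hc0.le ((min_le_left a 1).trans (by linarith [hx]))
        rw [hFb]
        exact hClow _ (hgmem (-b) hc0.le hc1) _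
          (lo_pi _ _ (hF₁range a).1 (hg0 (-b) hc0.le hc1))
          (le_pi _ _ _ _ hF₁le le_rfl)
    · -- b ≥ 0, so a ≤ 0 and F₁ a = 0
      have ha : a ≤ 0 := by linarith [hx]
      have hFa : F₁ a = 0 := by
        rw [hF₁def]
        simp only
        rw [min_eq_left (by linarith), max_eq_left ha]
      rw [hFa]
      exact Or.inr ⟨⟨lo_pi _ _ le_rfl (hF₂range b).1,
        hi_pi _ _ zero_le_one (hF₂range b).2⟩, by simp⟩
  · -- C ⊆ lower layer of image
    intro y hy
    have hy01 := hCsub hy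
    have ha0 : 0 ≤ y 0 := by simpa using hy01.1 0
    have ha1 : y 0 ≤ 1 := by simpa using hy01.2 0
    have hs0 : 0 ≤ y 1 := by simpa using hy01.1 1
    have hyeq : y = ![y 0, y 1] := by
      funext i
      fin_cases i <;> rfl
    have hsle : y 1 ≤ g (y 0) := hle_g _ _ (hyeq ▸ hy)
    rw [lowerLayer, Set.mem_iUnion₂]
    refine ⟨![F₁ ((![y 0, -(y 0)] : Fin 2 → ℝ) 0), F₂ ((![y 0, -(y 0)] : Fin 2 → ℝ) 1)],
      ⟨![y 0, -(y 0)], by simp, rfl⟩, ?_⟩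
    have h0 : (![y 0, -(y 0)] : Fin 2 → ℝ) 0 = y 0 := by simp
    have h1 : (![y 0, -(y 0)] : Fin 2 → ℝ) 1 = -(y 0) := by simp
    rw [h0, h1, hF₁id _ ha0 ha1, hF₂neg _ ha0 ha1]
    refine ⟨hyeq ▸ lo_pi _ _ ha0 hs0, ?_⟩
    calc y = ![y 0, y 1] := hyeq
    _ ≤ ![y 0, g (y 0)] := le_pi _ _ _ _ le_rfl hsle
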